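/- arXiv:2509.00162 — 3 statements merged into one kernel-verified Lean document; each statement's English description precedes it below -/
import Mathlib

section
/- Let x ∈ A^ℤ be a non-periodic Toeplitz sequence over a finite alphabet A with period structure (p_k)_{k≥1}, let X be the closure of the σ-orbit of x, and let c ≥ 1 be an integer. Then (X, σ^c) is a Toeplitz flow (i.e., topologically conjugate to the closure of the σ-orbit of some Toeplitz sequence over some finite alphabet) if and only if gcd(c, p_k) = 1 for all k. -/
open Set Topology Classical

noncomputable section

/-- The left shift `σ` on bi-infinite sequences: `(σ x) n = x (n+1)`. -/
def shiftMap {A : Type} (x : ℤ → A) : ℤ → A := fun n => x (n + 1)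

/-- The shift by an integer amount: `shiftZ n x = σ^n x`. -/
def shiftZ {A : Type} (n : ℤ) (x : ℤ → A) : ℤ → A := fun m => x (m + n)

/-- A bi-infinite sequence is Toeplitz if every coordinate is periodically repeated. -/
def IsToeplitz {A : Type} (x : ℤ → A) : Prop :=
  ∀ i : ℤ, ∃ p : ℕ, 0 < p ∧ ∀ k : ℤ, x (i + k * (p : ℤ)) = x i

/-- The closure of the full shift orbit of `x`. -/
def orbitClosure {A : Type} [TopologicalSpace A] (x : ℤ → A) : Set (ℤ → A) :=
  closure {y | ∃ n : ℤ, shiftZ n x = y}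

/-- The finite word `x_i x_{i+1} ⋯ x_{i+n-1}`. -/
def seqWord {A : Type} (x : ℤ → A) (i : ℤ) (n : ℕ) : List A :=
  List.ofFn fun m : Fin n => x (i + (m : ℕ))

/-- Iterates `θ^k` of a substitution, applied to a letter. -/
def substPow {A : Type} (θ : A → List A) : ℕ → A → List A
  | 0, a => [a]
  | k + 1, a => (θ a).flatMap (substPow θ k)

/-- The substitution subshift of `θ`: all sequences whose finite subwords occur in
some `θ^k(a)`. -/
def substShift {A : Type} (θ : A → List A) : Set (ℤ → A) :=
  {x | ∀ i : ℤ, ∀ n : ℕ, ∃ (k : ℕ) (a : A), (seqWord x i n).IsInfix (substPow θ k a)}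

/-- The full orbit of `x` under an (invertible) map `S`, within the set `X`. -/
def orbitIn {α : Type} (S : α → α) (X : Set α) (x : α) : Set α :=
  {y | y ∈ X ∧ ∃ n : ℕ, S^[n] x = y ∨ S^[n] y = x}

/-- Every `S`-orbit within `X` is dense in `X`. -/
def MinimalOn {α : Type} [TopologicalSpace α] (S : α → α) (X : Set α) : Prop :=
  ∀ x ∈ X, X ⊆ closure (orbitIn S X x)

/-- Every `T`-orbit in `X` is the union of exactly `c` distinct `S`-orbits. -/
def OrbitNumberOn {α : Type} (T S : α → α) (X : Set α) (c : ℕ) : Prop :=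
  ∀ x ∈ X, ∃ r : Fin c → α,
    (∀ i, r i ∈ orbitIn T X x) ∧
    (∀ i j, i ≠ j → r j ∉ orbitIn S X (r i)) ∧
    (∀ y ∈ orbitIn T X x, ∃ i, y ∈ orbitIn S X (r i))

/-- `S` restricts to a homeomorphism of the subset `X`. -/
def RestrictsToHomeomorph {α : Type} [TopologicalSpace α] (S : α → α) (X : Set α) : Prop :=
  ∃ e : X ≃ₜ X, ∀ x : X, (e x : α) = S (x : α)

/-- The systems `(X, S)` and `(Y, R)` are topologically conjugate. -/
def TopConj {α β : Type} [TopologicalSpace α] [TopologicalSpace β]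
    (X : Set α) (S : α → α) (Y : Set β) (R : β → β) : Prop :=
  ∃ (hS : Set.MapsTo S X X) (hR : Set.MapsTo R Y Y) (h : X ≃ₜ Y),
    ∀ x : X, h (Set.MapsTo.restrict S X X hS x) = Set.MapsTo.restrict R Y Y hR (h x)

/-- `(Y, R)` is a topological factor of `(X, S)`. -/
def IsFactorOn {α β : Type} [TopologicalSpace α] [TopologicalSpace β]
    (X : Set α) (S : α → α) (Y : Set β) (R : β → β) : Prop :=
  ∃ F : α → β, Set.MapsTo F X Y ∧ ContinuousOn F X ∧ Set.SurjOn F X Y ∧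
    ∀ x ∈ X, F (S x) = R (F x)

/-- `(X, S)` is a Toeplitz flow: it is topologically conjugate to the orbit closure of
some Toeplitz sequence over some finite alphabet, with the shift map. -/
def IsToeplitzFlow {α : Type} [TopologicalSpace α] (X : Set α) (S : α → α) : Prop :=
  ∃ (B : Type) (_ : Fintype B) (z : ℤ → B), IsToeplitz z ∧
    (letI : TopologicalSpace B := ⊥
     TopConj X S (orbitClosure z) shiftMap)

/-- `Per_p(x)`: the set of positions where `x` is periodic with period `p`. -/
def PerSet {A : Type} (x : ℤ → A) (p : ℕ) : Set ℤ :=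
  {k | ∀ n : ℤ, x (k + n * (p : ℤ)) = x k}

/-- `p` is an essential period of `x`. -/
def IsEssentialPeriod {A : Type} (x : ℤ → A) (p : ℕ) : Prop :=
  0 < p ∧ ¬ ∃ q : ℕ, 0 < q ∧ q < p ∧
    ((fun k => k + (q : ℤ)) '' PerSet x p = PerSet x p) ∧
    (∀ k ∈ PerSet x p, x (k + (q : ℤ)) = x k)

/-- A period structure for a Toeplitz sequence `x`. -/
def IsPeriodStructure {A : Type} (x : ℤ → A) (p : ℕ → ℕ) : Prop :=
  StrictMono p ∧ (∀ k, IsEssentialPeriod x (p k)) ∧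
  (∀ k, p k ∣ p (k + 1)) ∧ (⋃ k, PerSet x (p k)) = Set.univ

/-- `x` is a (σ-)periodic sequence. -/
def IsPeriodicSeq {A : Type} (x : ℤ → A) : Prop :=
  ∃ n : ℕ, 0 < n ∧ ∀ m : ℤ, x (m + (n : ℤ)) = x m

/-- `z` is the bi-infinite concatenation of the `ψ`-images of the letters of `y`,
with `ψ(y₀)` beginning at coordinate `0`. -/
def IsConcat {B C : Type} (ψ : B → List C) (y : ℤ → B) (z : ℤ → C) : Prop :=
  ∃ s : ℤ → ℤ, s 0 = 0 ∧
    (∀ n : ℤ, s (n + 1) = s n + ((ψ (y n)).length : ℤ)) ∧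
    (∀ n : ℤ, ∀ j : Fin (ψ (y n)).length, z (s n + (j : ℕ)) = (ψ (y n)).get j)

/-- `p(x,n) = Σ_{i<n} p(Sⁱ x)`. -/
def psum {X : Type} (p : X → ℕ) (S : X → X) (x : X) (n : ℕ) : ℕ :=
  ∑ i ∈ Finset.range n, p (S^[i] x)


set_option linter.unusedSectionVars false
set_option linter.unusedVariables false

section Lemmas
variable {A : Type}

lemma shiftZ_shiftZ (a b : ℤ) (x : ℤ → A) : shiftZ a (shiftZ b x) = shiftZ (a + b) x := by
  funext m; simp [shiftZ, add_assoc]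

lemma shiftZ_zero (x : ℤ → A) : shiftZ 0 x = x := by funext m; simp [shiftZ]

lemma shiftMap_iter (c : ℕ) (x : ℤ → A) : shiftMap^[c] x = shiftZ (c : ℤ) x := by
  induction c with
  | zero => simp [shiftZ_zero]
  | succ n ih =>
    rw [Function.iterate_succ_apply', ih]
    funext m; simp [shiftMap, shiftZ]; ring_nf

variable [TopologicalSpace A]

lemma continuous_shiftZ (n : ℤ) : Continuous (shiftZ n : (ℤ → A) → (ℤ → A)) :=
  continuous_pi fun m => continuous_apply (m + n)

lemma shiftZ_mapsTo (n : ℤ) (x : ℤ → A) :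
    Set.MapsTo (shiftZ n) (orbitClosure x) (orbitClosure x) := by
  intro y hy
  have h1 : shiftZ n '' closure {y | ∃ m : ℤ, shiftZ m x = y}
      ⊆ closure (shiftZ n '' {y | ∃ m : ℤ, shiftZ m x = y}) :=
    (continuous_shiftZ n).continuousOn.image_closure
  have h2 : shiftZ n '' {y | ∃ m : ℤ, shiftZ m x = y} ⊆ {y | ∃ m : ℤ, shiftZ m x = y} := by
    rintro _ ⟨w, ⟨m, rfl⟩, rfl⟩
    exact ⟨n + m, (shiftZ_shiftZ n m x).symm⟩
  exact closure_mono h2 (h1 ⟨y, hy, rfl⟩)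

lemma mem_orbitClosure_self (x : ℤ → A) : x ∈ orbitClosure x :=
  subset_closure ⟨0, shiftZ_zero x⟩

variable [DiscreteTopology A]

lemma mem_closure_iff_agree (S : Set (ℤ → A)) (y : ℤ → A) :
    y ∈ closure S ↔ ∀ N : ℕ, ∃ w ∈ S, ∀ i : ℤ, |i| ≤ (N : ℤ) → w i = y i := by
  constructor
  · intro h N
    set U : Set (ℤ → A) := ⋂ i ∈ Finset.Icc (-(N:ℤ)) (N:ℤ), (fun w : ℤ → A => w i) ⁻¹' {y i}
      with hU
    have hUo : IsOpen U := isOpen_biInter_finset fun i _ =>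
      (continuous_apply i).isOpen_preimage _ (isOpen_discrete _)
    have hyU : y ∈ U := by simp [hU]
    obtain ⟨w, hwU, hwS⟩ := (mem_closure_iff.mp h) U hUo hyU
    refine ⟨w, hwS, fun i hi => ?_⟩
    have : i ∈ Finset.Icc (-(N:ℤ)) (N:ℤ) := by
      rw [Finset.mem_Icc]; constructor <;> [linarith [abs_le.mp hi]; exact (abs_le.mp hi).2]
    simpa using Set.mem_iInter₂.mp hwU i this
  · intro h
    choose w hwS hw using h
    have ht : Filter.Tendsto w Filter.atTop (nhds y) := by
      rw [tendsto_pi_nhds]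
      intro i
      refine tendsto_const_nhds.congr' ?_
      filter_upwards [Filter.eventually_ge_atTop |i|.toNat] with N hN
      exact (hw N i (by omega)).symm
    exact mem_closure_of_tendsto ht (Filter.Eventually.of_forall hwS)

end Lemmas

section Stage2
variable {A : Type}

lemma perSet_mono {x : ℤ → A} {p q : ℕ} (h : p ∣ q) : PerSet x p ⊆ PerSet x q := by
  intro k hk n
  obtain ⟨t, rfl⟩ := h
  calc x (k + n * ((p*t : ℕ) : ℤ)) = x (k + (n * t) * (p : ℤ)) := by push_cast; ring_nf
    _ = x k := hk (n * t)

lemma perSet_add_mul {x : ℤ → A} {p : ℕ} {k : ℤ} (hk : k ∈ PerSet x p) (s : ℤ) :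
    k + s * (p : ℤ) ∈ PerSet x p := by
  intro n
  calc x (k + s * p + n * p) = x (k + (s + n) * p) := by ring_nf
    _ = x k := hk (s + n)
    _ = x (k + s * p) := (hk s).symm

/-- common period for a window -/
lemma toeplitz_window {x : ℤ → A} (hx : IsToeplitz x) (N : ℕ) (j : ℤ) :
    ∃ p : ℕ, 0 < p ∧ ∀ i : ℤ, |i| ≤ (N : ℤ) → j + i ∈ PerSet x p := by
  induction N with
  | zero =>
    obtain ⟨p, hp, hper⟩ := hx j
    refine ⟨p, hp, fun i hi => ?_⟩
    have h0 := abs_le.mp hi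
    have : i = 0 := by omega
    subst this
    simpa [PerSet] using fun n => hper n
  | succ N ih =>
    obtain ⟨p, hp, hper⟩ := ih
    obtain ⟨p1, hp1, hper1⟩ := hx (j + ((N:ℤ)+1))
    obtain ⟨p2, hp2, hper2⟩ := hx (j - ((N:ℤ)+1))
    refine ⟨p * p1 * p2, by positivity, fun i hi => ?_⟩
    have h0 := abs_le.mp hi
    rcases lt_or_ge |i| ((N:ℤ)+1) with h | h
    · have h1 := abs_le.mp (show |i| ≤ (N:ℤ) by have := abs_nonneg i; omega)
      exact perSet_mono ⟨p1 * p2, by ring⟩ (hper i (abs_le.mpr h1))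
    · have h2 := abs_le.mp hi
      have : i = (N:ℤ)+1 ∨ i = -((N:ℤ)+1) := by
        rcases abs_cases i with ⟨he, _⟩ | ⟨he, _⟩ <;> push_cast at h2 ⊢ <;> omega
      rcases this with rfl | rfl
      · intro n
        have harg : j + ((N:ℤ)+1) + n * ((p*p1*p2 : ℕ):ℤ)
            = j + ((N:ℤ)+1) + (n * p * p2) * (p1:ℤ) := by push_cast; ring
        rw [harg]; exact hper1 _
      · intro n
        have harg : j + (-((N:ℤ)+1)) + n * ((p*p1*p2 : ℕ):ℤ)
            = j - ((N:ℤ)+1) + (n * p * p1) * (p2:ℤ) := by push_cast; ring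
        rw [harg, show j + (-((N:ℤ)+1)) = j - ((N:ℤ)+1) by ring]
        exact hper2 _

variable [TopologicalSpace A] [DiscreteTopology A]

/-- Minimality of Toeplitz orbit closures. -/
lemma toeplitz_minimal {z : ℤ → A} (hz : IsToeplitz z) {v : ℤ → A} (hv : v ∈ orbitClosure z) :
    orbitClosure z ⊆ closure {y | ∃ m : ℤ, shiftZ m v = y} := by
  have hzc : z ∈ closure {y | ∃ m : ℤ, shiftZ m v = y} := by
    rw [mem_closure_iff_agree]
    intro N
    obtain ⟨p, hp, hper⟩ := toeplitz_window hz N 0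
    obtain ⟨w, ⟨n, rfl⟩, hagree⟩ := (mem_closure_iff_agree _ _).mp hv (N + p)
    set m : ℤ := (-n) % (p : ℤ) with hm
    have hp' : (0:ℤ) < p := by exact_mod_cast hp
    have hm0 : 0 ≤ m := Int.emod_nonneg _ (by omega)
    have hmp : m < p := Int.emod_lt_of_pos _ hp'
    have hdvd : (p:ℤ) ∣ (m + n) := by
      have h1 : (p:ℤ) ∣ (-n) - m := Int.dvd_self_sub_of_emod_eq rfl
      have h2 : m + n = -((-n) - m) := by ring
      rw [h2]; exact dvd_neg.mpr h1
    obtain ⟨s, hs⟩ := hdvd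
    have hs' : m + n = s * (p:ℤ) := by rw [hs]; ring
    refine ⟨shiftZ m v, ⟨m, rfl⟩, fun i hi => ?_⟩
    have hb := abs_le.mp hi
    have h2 : v (i + m) = z (i + m + n) := by
      refine (hagree (i + m) ?_).symm
      rw [abs_le]; push_cast; omega
    have h3 : z (i + m + n) = z i := by
      have hh := hper i hi s
      simp only [zero_add] at hh
      rw [show i + m + n = i + s * (p:ℤ) by rw [← hs']; ring]
      exact hh
    show v (i + m) = z i
    rw [h2, h3]
  have horb : {y | ∃ m : ℤ, shiftZ m z = y} ⊆ closure {y | ∃ m : ℤ, shiftZ m v = y} := by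
    rintro _ ⟨k, rfl⟩
    have h1 : shiftZ k z ∈ shiftZ k '' closure {y | ∃ m : ℤ, shiftZ m v = y} := ⟨z, hzc, rfl⟩
    have h2 := (continuous_shiftZ (A := A) k).continuousOn.image_closure h1
    refine closure_mono ?_ h2
    rintro _ ⟨w, ⟨m, rfl⟩, rfl⟩
    exact ⟨k + m, (shiftZ_shiftZ k m v).symm⟩
  exact closure_minimal horb isClosed_closure

end Stage2
section Stage3
variable {A : Type}

/-- p k ∣ p l for k ≤ l in a divisibility chain. -/
lemma chain_dvd {p : ℕ → ℕ} (hd : ∀ k, p k ∣ p (k + 1)) : ∀ {k l : ℕ}, k ≤ l → p k ∣ p l := by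
  intro k l h
  induction l with
  | zero => simp_all
  | succ n ih =>
    rcases Nat.lt_or_ge k (n+1) with h' | h'
    · exact (ih (by omega)).trans (hd n)
    · have : k = n + 1 := by omega
      subst this; exact dvd_refl _

/-- window of positions all in one PerSet of the structure -/
lemma structure_window {x : ℤ → A} {p : ℕ → ℕ}
    (hcov : (⋃ k, PerSet x (p k)) = Set.univ) (hd : ∀ k, p k ∣ p (k + 1)) (N : ℕ) (j : ℤ) :
    ∃ K : ℕ, ∀ i : ℤ, |i| ≤ (N : ℤ) → j + i ∈ PerSet x (p K) := by
  have hmem : ∀ m : ℤ, ∃ K, m ∈ PerSet x (p K) := by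
    intro m
    have : m ∈ (⋃ k, PerSet x (p k)) := by rw [hcov]; trivial
    simpa using this
  induction N with
  | zero =>
    obtain ⟨K, hK⟩ := hmem j
    refine ⟨K, fun i hi => ?_⟩
    have h0 := abs_le.mp hi
    have : i = 0 := by omega
    subst this; simpa using hK
  | succ N ih =>
    obtain ⟨K, hK⟩ := ih
    obtain ⟨K1, hK1⟩ := hmem (j + ((N:ℤ)+1))
    obtain ⟨K2, hK2⟩ := hmem (j - ((N:ℤ)+1))
    refine ⟨max K (max K1 K2), fun i hi => ?_⟩
    have h0 := abs_le.mp hi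
    rcases lt_or_ge |i| ((N:ℤ)+1) with h | h
    · have h1 := abs_le.mp (show |i| ≤ (N:ℤ) by have := abs_nonneg i; omega)
      exact perSet_mono (chain_dvd hd (le_max_left _ _)) (hK i (abs_le.mpr h1))
    · have h2 := abs_le.mp hi
      have : i = (N:ℤ)+1 ∨ i = -((N:ℤ)+1) := by
        rcases abs_cases i with ⟨he, _⟩ | ⟨he, _⟩ <;> push_cast at h2 ⊢ <;> omega
      rcases this with rfl | rfl
      · exact perSet_mono (chain_dvd hd ((le_max_left K1 K2).trans (le_max_right _ _))) hK1
      · exact perSet_mono (chain_dvd hd ((le_max_right K1 K2).trans (le_max_right _ _))) hK2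

/-- The `c`-block recoding map. -/
def recode (c : ℕ) (y : ℤ → A) : ℤ → (Fin c → A) := fun n j => y (n * (c:ℤ) + (j:ℕ))

lemma recode_injective {c : ℕ} (hc : 0 < c) : Function.Injective (recode (A := A) c) := by
  intro y y' h
  funext m
  have hc' : (0:ℤ) < c := by exact_mod_cast hc
  have hdm := Int.mul_ediv_add_emod m (c:ℤ)
  have hm0 : 0 ≤ m % (c:ℤ) := Int.emod_nonneg _ (by omega)
  have hmc : m % (c:ℤ) < c := Int.emod_lt_of_pos _ hc'
  have hj : ((m % (c:ℤ)).toNat : ℤ) = m % (c:ℤ) := Int.toNat_of_nonneg hm0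
  have hjlt : (m % (c:ℤ)).toNat < c := by omega
  have h1 := congrFun (congrFun h (m / (c:ℤ))) ⟨(m % (c:ℤ)).toNat, hjlt⟩
  simp only [recode] at h1
  have hdm' : m / (c:ℤ) * c + m % c = m := by rw [mul_comm]; exact hdm
  rw [show (m / (c:ℤ)) * c + ((m % (c:ℤ)).toNat : ℤ) = m by rw [hj]; linarith [hdm']] at h1
  exact h1

lemma continuous_recode {c : ℕ} [TopologicalSpace A] [DiscreteTopology A] :
    Continuous (recode (A := A) c :
      (ℤ → A) → (ℤ → (Fin c → A))) := by
  refine continuous_pi fun n => continuous_pi fun j => continuous_apply _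

lemma recode_shiftZ (c : ℕ) (m : ℤ) (y : ℤ → A) :
    recode c (shiftZ (m * c) y) = shiftZ m (recode c y) := by
  funext n j
  simp only [recode, shiftZ]
  congr 1
  ring

lemma recode_shiftMap (c : ℕ) (y : ℤ → A) :
    recode c (shiftZ (c:ℤ) y) = shiftMap (recode c y) := by
  funext n j
  simp only [recode, shiftZ, shiftMap]
  congr 1
  ring

end Stage3
section Stage4
variable {A : Type} [Fintype A] [TopologicalSpace A] [DiscreteTopology A]

lemma coprime_shift_exists {c q : ℕ} (hg : Nat.gcd c q = 1) (n : ℤ) :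
    ∃ m t : ℤ, m * (c:ℤ) = n + t * (q:ℤ) := by
  have : IsCoprime (c:ℤ) (q:ℤ) := by
    rw [Int.isCoprime_iff_gcd_eq_one]
    simpa using hg
  obtain ⟨u, v, huv⟩ := this
  exact ⟨n * u, -(n * v), by linear_combination n * huv⟩

/-- With the coprimality condition, the σ^c-orbit of x is dense in X. -/
lemma dense_c_orbit {x : ℤ → A} {p : ℕ → ℕ} (hps : IsPeriodStructure x p)
    {c : ℕ} (hg : ∀ k, Nat.gcd c (p k) = 1) :
    orbitClosure x = closure {y | ∃ m : ℤ, shiftZ (m * (c:ℤ)) x = y} := by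
  apply le_antisymm
  · have hsub : {y | ∃ n : ℤ, shiftZ n x = y}
        ⊆ closure {y | ∃ m : ℤ, shiftZ (m * (c:ℤ)) x = y} := by
      rintro _ ⟨n, rfl⟩
      rw [mem_closure_iff_agree]
      intro N
      obtain ⟨K, hK⟩ := structure_window hps.2.2.2 hps.2.2.1 N n
      obtain ⟨m, t, hmt⟩ := coprime_shift_exists (hg K) n
      refine ⟨shiftZ (m * (c:ℤ)) x, ⟨m, rfl⟩, fun i hi => ?_⟩
      show x (i + m * (c:ℤ)) = x (i + n)
      rw [hmt, show i + (n + t * ((p K):ℤ)) = (n + i) + t * ((p K):ℤ) by ring]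
      rw [add_comm i n]
      exact hK i hi t
    exact closure_minimal hsub isClosed_closure
  · apply closure_mono
    rintro _ ⟨m, rfl⟩
    exact ⟨m * c, rfl⟩

lemma recode_toeplitz {x : ℤ → A} {p : ℕ → ℕ} (hps : IsPeriodStructure x p) (c : ℕ) :
    IsToeplitz (recode c x) := by
  intro n
  obtain ⟨K, hK⟩ := structure_window hps.2.2.2 hps.2.2.1 c (n * (c:ℤ))
  refine ⟨p K, (hps.2.1 K).1, fun k => ?_⟩
  funext j
  show x ((n + k * ((p K):ℤ)) * c + (j:ℕ)) = x (n * c + (j:ℕ))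
  rw [show (n + k * ((p K):ℤ)) * c + ((j:ℕ):ℤ)
      = (n * (c:ℤ) + (j:ℕ)) + (k * c) * ((p K):ℤ) by ring]
  have hj : |((j:ℕ):ℤ)| ≤ (c:ℤ) := by
    rw [abs_of_nonneg (by positivity)]
    exact_mod_cast (j.2.le)
  exact hK (j:ℕ) hj (k * c)

lemma forward_dir {x : ℤ → A} (hx : IsToeplitz x) {p : ℕ → ℕ} (hps : IsPeriodStructure x p)
    {c : ℕ} (hc : 1 ≤ c) (hg : ∀ k, Nat.gcd c (p k) = 1) :
    IsToeplitzFlow (orbitClosure x) (shiftMap^[c]) := by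
  classical
  refine ⟨Fin c → A, inferInstance, recode c x, recode_toeplitz hps c, ?_⟩
  have hbot : (⊥ : TopologicalSpace (Fin c → A)) = (inferInstance : TopologicalSpace (Fin c → A)) :=
    DiscreteTopology.eq_bot.symm
  show letI : TopologicalSpace (Fin c → A) := ⊥
    TopConj (orbitClosure x) (shiftMap^[c]) (orbitClosure (recode c x)) shiftMap
  rw [hbot]
  -- now with the standard (Pi, discrete) topology
  set z := recode c x with hz
  set X := orbitClosure x with hX
  set Y := orbitClosure z with hY
  have hcc : (shiftMap^[c] : (ℤ → A) → (ℤ → A)) = shiftZ (c:ℤ) := by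
    funext y; exact shiftMap_iter c y
  have hS : Set.MapsTo (shiftMap^[c]) X X := by rw [hcc]; exact shiftZ_mapsTo _ x
  have hR : Set.MapsTo shiftMap Y Y := by
    have : (shiftMap : (ℤ → Fin c → A) → _) = shiftZ 1 := by funext y m; rfl
    rw [this]; exact shiftZ_mapsTo _ z
  -- image identity
  have hXd := dense_c_orbit hps hg
  have himg : recode c '' X = Y := by
    apply le_antisymm
    · rw [hX, hXd]
      intro w hw
      obtain ⟨y, hy, rfl⟩ := hw
      have h1 := (continuous_recode (c := c)).continuousOn.image_closure ⟨y, hy, rfl⟩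
      refine closure_mono ?_ h1
      rintro _ ⟨w', ⟨m, rfl⟩, rfl⟩
      exact ⟨m, (recode_shiftZ c m x).symm⟩
    · have hcomp : IsCompact (recode c '' X) :=
        (isClosed_closure.isCompact).image continuous_recode
      refine closure_minimal ?_ hcomp.isClosed
      rintro _ ⟨m, rfl⟩
      refine ⟨shiftZ (m * c) x, ?_, recode_shiftZ c m x⟩
      exact subset_closure ⟨m * c, rfl⟩
  -- the homeomorphism
  have hmapsto : Set.MapsTo (recode c) X Y := fun y hy => himg ▸ ⟨y, hy, rfl⟩
  have hbij : Function.Bijective (Set.MapsTo.restrict _ X Y hmapsto) := by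
    constructor
    · intro a b hab
      have := congrArg Subtype.val hab
      exact Subtype.ext (recode_injective hc this)
    · rintro ⟨w, hw⟩
      obtain ⟨y, hy, rfl⟩ := himg ▸ hw
      exact ⟨⟨y, hy⟩, rfl⟩
  haveI : CompactSpace X := isCompact_iff_compactSpace.mp isClosed_closure.isCompact
  have hcont : Continuous (Set.MapsTo.restrict _ X Y hmapsto) :=
    Continuous.restrict _ continuous_recode
  let e : X ≃ Y := Equiv.ofBijective _ hbij
  have hecont : Continuous (e : X → Y) := hcont
  let h : X ≃ₜ Y := Continuous.homeoOfEquivCompactToT2 (f := e) hecont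
  refine ⟨hS, hR, h, fun u => ?_⟩
  apply Subtype.ext
  show recode c (shiftMap^[c] (u : ℤ → A)) = shiftMap (recode c (u : ℤ → A))
  rw [hcc]
  exact recode_shiftMap c (u : ℤ → A)

end Stage4
section Stage5
variable {A : Type} [TopologicalSpace A] [DiscreteTopology A]

lemma exists_agree {x : ℤ → A} {c : ℕ}
    (hflow : IsToeplitzFlow (orbitClosure x) (shiftMap^[c])) :
    ∀ N : ℕ, ∃ m : ℤ, ∀ i : ℤ, |i| ≤ (N:ℤ) → x (i + (1 + m * (c:ℤ))) = x i := by
  classical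
  obtain ⟨B, finB, z, hz, hconj⟩ := hflow
  letI tB : TopologicalSpace B := ⊥
  haveI : DiscreteTopology B := ⟨rfl⟩
  set X := orbitClosure x with hX
  set Y := orbitClosure z with hY
  have hconj' : TopConj X (shiftMap^[c]) Y shiftMap := hconj
  obtain ⟨hS, hR, h, hcomm⟩ := hconj'
  have hcc : (shiftMap^[c] : (ℤ → A) → (ℤ → A)) = shiftZ (c:ℤ) := by
    funext y; exact shiftMap_iter c y
  set S' : X → X := Set.MapsTo.restrict _ X X hS with hS'
  set R' : Y → Y := Set.MapsTo.restrict _ Y Y hR with hR'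
  have hSval : ∀ w : X, ((S' w : ℤ → A)) = shiftZ (c:ℤ) (w : ℤ → A) := by
    intro w; show shiftMap^[c] (w : ℤ → A) = _; rw [hcc]
  have hRval : ∀ v : Y, ((R' v : ℤ → B)) = shiftZ 1 (v : ℤ → B) := fun v => rfl
  have hSiter : ∀ (n : ℕ) (w : X), ((S'^[n] w : ℤ → A)) = shiftZ ((n:ℤ) * c) (w : ℤ → A) := by
    intro n
    induction n with
    | zero => intro w; simp [shiftZ_zero]
    | succ n ih =>
      intro w
      rw [Function.iterate_succ_apply', hSval, ih, shiftZ_shiftZ]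
      congr 1
      push_cast
      ring
  have hRiter : ∀ (n : ℕ) (v : Y), ((R'^[n] v : ℤ → B)) = shiftZ (n:ℤ) (v : ℤ → B) := by
    intro n
    induction n with
    | zero => intro v; simp [shiftZ_zero]
    | succ n ih =>
      intro v
      rw [Function.iterate_succ_apply', hRval, ih, shiftZ_shiftZ]
      congr 1
      push_cast
      ring
  have hconj_iter : ∀ (n : ℕ) (w : X), h (S'^[n] w) = R'^[n] (h w) := by
    intro n
    induction n with
    | zero => intro w; rfl
    | succ n ih =>
      intro w
      rw [Function.iterate_succ_apply', Function.iterate_succ_apply', hcomm, ih]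
  -- the main claim for all integer powers
  have CLAIM : ∀ (w : X) (m : ℤ) (hw' : shiftZ (m * c) (w : ℤ → A) ∈ X),
      ((h ⟨shiftZ (m * c) (w : ℤ → A), hw'⟩ : ℤ → B)) = shiftZ m ((h w : ℤ → B)) := by
    have hpos : ∀ (n : ℕ) (w : X) (hw' : shiftZ ((n:ℤ) * c) (w : ℤ → A) ∈ X),
        ((h ⟨shiftZ ((n:ℤ) * c) (w : ℤ → A), hw'⟩ : ℤ → B)) = shiftZ (n:ℤ) ((h w : ℤ → B)) := by
      intro n w hw'
      have he : (⟨shiftZ ((n:ℤ) * c) (w : ℤ → A), hw'⟩ : X) = S'^[n] w :=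
        Subtype.ext (hSiter n w).symm
      rw [he, hconj_iter, hRiter]
    intro w m hw'
    rcases le_or_gt 0 m with hm | hm
    · obtain ⟨n, rfl⟩ := Int.eq_ofNat_of_zero_le hm
      exact hpos n w hw'
    · set w' : X := ⟨shiftZ (m * c) (w : ℤ → A), hw'⟩ with hw'def
      obtain ⟨n, hn⟩ := Int.eq_ofNat_of_zero_le (le_of_lt (neg_pos.mpr hm))
      have hmem : shiftZ ((n:ℤ) * c) (w' : ℤ → A) ∈ X :=
        shiftZ_mapsTo _ x hw'
      have h1 := hpos n w' hmem
      have hval : shiftZ ((n:ℤ) * c) (w' : ℤ → A) = (w : ℤ → A) := by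
        show shiftZ ((n:ℤ) * c) (shiftZ (m * c) (w : ℤ → A)) = _
        rw [shiftZ_shiftZ, show (n:ℤ) * c + m * c = 0 by rw [← hn]; ring, shiftZ_zero]
      have he : (⟨shiftZ ((n:ℤ) * c) (w' : ℤ → A), hmem⟩ : X) = w := Subtype.ext hval
      rw [he] at h1
      -- h1 : (h w).val = shiftZ n (h w').val
      have := congrArg (shiftZ m) h1
      rw [shiftZ_shiftZ, show m + (n:ℤ) = 0 by omega, shiftZ_zero] at this
      exact this.symm
  -- minimality transport
  have hbmem : shiftZ 1 x ∈ X := shiftZ_mapsTo 1 x (mem_orbitClosure_self x)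
  set b : X := ⟨shiftZ 1 x, hbmem⟩ with hb
  set a : X := ⟨x, mem_orbitClosure_self x⟩ with ha
  set v : ℤ → B := (h b : ℤ → B) with hv
  set O : Set (ℤ → B) := {y | ∃ m : ℤ, shiftZ m v = y} with hO
  have hOsubY : O ⊆ Y := by rintro _ ⟨m, rfl⟩; exact shiftZ_mapsTo m z (h b).2
  have hmin : ((h a : ℤ → B)) ∈ closure O := toeplitz_minimal hz (h b).2 (h a).2
  have hsub1 : h a ∈ closure (Subtype.val ⁻¹' O : Set Y) := by
    rw [closure_subtype, Subtype.image_preimage_coe,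
      Set.inter_eq_self_of_subset_right hOsubY]
    exact hmin
  have hsub2 : a ∈ closure (h.symm '' (Subtype.val ⁻¹' O : Set Y)) := by
    rw [← h.symm.image_closure]
    exact ⟨h a, hsub1, h.symm_apply_apply a⟩
  set T : Set X := {w : X | ∃ m : ℤ, (w : ℤ → A) = shiftZ (m * c) (shiftZ 1 x)} with hT
  have hsub3 : h.symm '' (Subtype.val ⁻¹' O : Set Y) ⊆ T := by
    rintro _ ⟨u, hu, rfl⟩
    obtain ⟨m, hm⟩ := hu
    have hmem : shiftZ (m * c) (b : ℤ → A) ∈ X := shiftZ_mapsTo _ x hbmem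
    have h1 := CLAIM b m hmem
    rw [hm] at h1
    have h2 : h (⟨shiftZ (m * c) (b : ℤ → A), hmem⟩ : X) = u := Subtype.ext h1
    have h3 : h.symm u = ⟨shiftZ (m * c) (b : ℤ → A), hmem⟩ := by
      rw [← h2, h.symm_apply_apply]
    rw [h3]
    exact ⟨m, rfl⟩
  have hsub4 : a ∈ closure T := closure_mono hsub3 hsub2
  have hsub5 : x ∈ closure {y : ℤ → A | ∃ m : ℤ, shiftZ (1 + m * c) x = y} := by
    have := closure_subtype.mp hsub4
    refine closure_mono ?_ this
    rintro _ ⟨w, ⟨m, hw⟩, rfl⟩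
    exact ⟨m, by rw [hw, shiftZ_shiftZ, add_comm]⟩
  intro N
  obtain ⟨w, ⟨m, rfl⟩, hagree⟩ := (mem_closure_iff_agree _ _).mp hsub5 N
  exact ⟨m, fun i hi => hagree i hi⟩

end Stage5
section Stage6
variable {A : Type}

lemma backward_core {x : ℤ → A} {p : ℕ → ℕ} (hps : IsPeriodStructure x p) {c : ℕ}
    (hagree : ∀ N : ℕ, ∃ m : ℤ, ∀ i : ℤ, |i| ≤ (N:ℤ) → x (i + (1 + m * (c:ℤ))) = x i) :
    ∀ k, Nat.gcd c (p k) = 1 := by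
  classical
  by_contra hcon
  push_neg at hcon
  obtain ⟨K, hK⟩ := hcon
  set d : ℕ := Nat.gcd c (p K) with hd
  have hpK : 0 < p K := (hps.2.1 K).1
  have hd0 : 0 < d := Nat.gcd_pos_of_pos_right _ hpK
  have hd2 : 2 ≤ d := by omega
  have hdc : (d:ℤ) ∣ (c:ℤ) := Int.natCast_dvd_natCast.mpr (Nat.gcd_dvd_left _ _)
  have hdp : (d:ℤ) ∣ ((p K):ℤ) := Int.natCast_dvd_natCast.mpr (Nat.gcd_dvd_right _ _)
  -- the sequence of shifts
  choose m hm using hagree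
  set r : ℕ → ℤ := fun N => 1 + m N * c with hrdef
  have hr : ∀ N : ℕ, ∀ i : ℤ, |i| ≤ (N:ℤ) → x (i + r N) = x i := hm
  have hrd : ∀ N, r N % (d:ℤ) = 1 % (d:ℤ) := by
    intro N
    obtain ⟨e, he⟩ := hdc
    show (1 + m N * c) % d = 1 % d
    rw [he, show 1 + m N * ((d:ℤ) * e) = 1 + (m N * e) * d by ring, Int.add_mul_emod_self_right]
  -- ultrafilter
  obtain U := Ultrafilter.of (Filter.atTop : Filter ℕ)
  have hUle : (Ultrafilter.of (Filter.atTop : Filter ℕ) : Filter ℕ) ≤ Filter.atTop :=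
    Ultrafilter.of_le _
  set 𝒰 := Ultrafilter.of (Filter.atTop : Filter ℕ) with h𝒰
  -- residues
  have hres : ∀ L : ℕ, ∃ q : ℤ, 0 ≤ q ∧ q < (p L : ℤ) ∧ {N | r N % (p L : ℤ) = q} ∈ 𝒰 := by
    intro L
    have hpL : (0:ℤ) < (p L : ℤ) := by exact_mod_cast (hps.2.1 L).1
    have hcover : (⋃ q ∈ (Finset.Ico (0:ℤ) (p L : ℤ) : Set ℤ), {N | r N % (p L : ℤ) = q})
        ∈ 𝒰 := by
      have : (⋃ q ∈ (Finset.Ico (0:ℤ) (p L : ℤ) : Set ℤ), {N | r N % (p L : ℤ) = q})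
          = Set.univ := by
        ext N
        simp only [Set.mem_iUnion, Set.mem_univ, iff_true, Set.mem_setOf_eq]
        refine ⟨r N % (p L : ℤ), ?_, rfl⟩
        simp only [Finset.coe_Ico, Set.mem_Ico]
        exact ⟨Int.emod_nonneg _ (by omega), Int.emod_lt_of_pos _ hpL⟩
      rw [this]
      exact Filter.univ_mem
    obtain ⟨q, hq1, hq2⟩ := (Ultrafilter.finite_biUnion_mem_iff
      (Finset.Ico (0:ℤ) (p L : ℤ)).finite_toSet).mp hcover
    simp only [Finset.coe_Ico, Set.mem_Ico] at hq1
    exact ⟨q, hq1.1, hq1.2, hq2⟩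
  choose q hq0 hq1 hqU using hres
  -- coherence
  have hcoh : ∀ {L M : ℕ}, L ≤ M → q M % (p L : ℤ) = q L := by
    intro L M hLM
    obtain ⟨N, hN⟩ := Ultrafilter.nonempty_of_mem (Filter.inter_mem (hqU L) (hqU M))
    obtain ⟨hNL, hNM⟩ := hN
    have hdvd : ((p L : ℤ)) ∣ ((p M : ℤ)) := Int.natCast_dvd_natCast.mpr (chain_dvd hps.2.2.1 hLM)
    calc q M % (p L : ℤ) = r N % (p M : ℤ) % (p L : ℤ) := by rw [hNM]
      _ = r N % (p L : ℤ) := Int.emod_emod_of_dvd _ hdvd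
      _ = q L := hNL
  -- star property
  have hstar : ∀ (L : ℕ) (k : ℤ), k + q L ∈ PerSet x (p L) → x (k + q L) = x k := by
    intro L k hk
    have hWU : {N : ℕ | k.natAbs ≤ N} ∈ 𝒰 := hUle (Filter.mem_atTop k.natAbs)
    obtain ⟨N, hN1, hN2⟩ := Ultrafilter.nonempty_of_mem (Filter.inter_mem (hqU L) hWU)
    have hN2' : k.natAbs ≤ N := hN2
    have h1 : x (k + r N) = x k := hr N k (by rw [abs_le]; omega)
    set t := r N / (p L : ℤ) with ht
    have h2 : r N = (p L : ℤ) * t + q L := by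
      rw [← hN1]
      exact (Int.mul_ediv_add_emod _ _).symm
    have h3 : x (k + r N) = x (k + q L) := by
      rw [show k + r N = (k + q L) + t * (p L : ℤ) by linear_combination h2]
      exact hk t
    rw [← h3, h1]
  -- q K is ≡ 1 mod d, hence nonzero
  have hqKd : q K % (d:ℤ) = 1 := by
    obtain ⟨N, hN⟩ := Ultrafilter.nonempty_of_mem (hqU K)
    have : q K % (d:ℤ) = r N % (p K : ℤ) % (d:ℤ) := by rw [hN]
    rw [this, Int.emod_emod_of_dvd _ hdp, hrd N]
    exact Int.emod_eq_of_lt (by norm_num) (by omega)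
  have hqK0 : 0 < q K := by
    rcases lt_or_eq_of_le (hq0 K) with h | h
    · exact h
    · exfalso; rw [← h] at hqKd; simp at hqKd
  -- cover
  have hmem : ∀ mm : ℤ, ∃ L, mm ∈ PerSet x (p L) := by
    intro mm
    have : mm ∈ (⋃ k, PerSet x (p k)) := by rw [hps.2.2.2]; trivial
    simpa using this
  -- G1
  have G1 : ∀ k ∈ PerSet x (p K), x (k + q K) = x k := by
    intro k hk
    obtain ⟨L0, hL0⟩ := hmem (k + q K)
    set M := max K L0 with hM
    have hkM : k + q K ∈ PerSet x (p M) :=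
      perSet_mono (chain_dvd hps.2.2.1 (le_max_right _ _)) hL0
    have hcohKM := hcoh (le_max_left K L0)
    have hsplit : q M = (p K : ℤ) * (q M / (p K : ℤ)) + q K := by
      rw [← hcohKM]; exact (Int.mul_ediv_add_emod _ _).symm
    set s := q M / (p K : ℤ) with hs
    have hj : k + q K - q M = k + (-s) * (p K : ℤ) := by rw [hsplit]; ring
    have h1 : x ((k + q K - q M) + q M) = x (k + q K - q M) := by
      apply hstar M
      rw [show k + q K - q M + q M = k + q K by ring]
      exact hkM
    rw [show k + q K - q M + q M = k + q K by ring] at h1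
    rw [h1, hj]
    exact hk (-s)
  -- G2
  have G2 : ∀ k ∈ PerSet x (p K), k + q K ∈ PerSet x (p K) := by
    intro k hk n
    have h1 := G1 _ (perSet_add_mul hk n)
    calc x (k + q K + n * ((p K):ℤ))
        = x (k + n * ((p K):ℤ) + q K) := by
          rw [show k + q K + n * ((p K):ℤ) = k + n * ((p K):ℤ) + q K by ring]
      _ = x (k + n * ((p K):ℤ)) := h1
      _ = x k := hk n
      _ = x (k + q K) := (G1 k hk).symm
  -- G3
  have G3 : ∀ k ∈ PerSet x (p K), (k - q K ∈ PerSet x (p K) ∧ x (k - q K) = x k) := by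
    intro k hk
    have hall : ∀ n : ℤ, x (k - q K + n * ((p K):ℤ)) = x k := by
      intro n
      have h1 : x ((k - q K + n * ((p K):ℤ)) + q K) = x (k - q K + n * ((p K):ℤ)) := by
        apply hstar K
        rw [show k - q K + n * ((p K):ℤ) + q K = k + n * ((p K):ℤ) by ring]
        exact perSet_add_mul hk n
      rw [show k - q K + n * ((p K):ℤ) + q K = k + n * ((p K):ℤ) by ring] at h1
      rw [← h1]
      exact hk n
    have he : x (k - q K) = x k := by
      have := hall 0
      simpa using this
    refine ⟨fun n => ?_, he⟩
    rw [hall n, he]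
  -- contradiction with essential period
  have hess := (hps.2.1 K).2
  apply hess
  refine ⟨(q K).toNat, by omega, by
    have := hq1 K; omega, ?_, ?_⟩
  · have hcast : (((q K).toNat : ℕ) : ℤ) = q K := Int.toNat_of_nonneg (hq0 K)
    rw [hcast]
    ext k
    constructor
    · rintro ⟨j, hj, rfl⟩
      exact G2 j hj
    · intro hk
      exact ⟨k - q K, (G3 k hk).1, by ring⟩
  · intro k hk
    have hcast : (((q K).toNat : ℕ) : ℤ) = q K := Int.toNat_of_nonneg (hq0 K)
    rw [hcast]
    exact G1 k hk

end Stage6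

/-- (X, σᶜ) is a Toeplitz flow iff gcd(c, p_k) = 1 for all k. -/
theorem statement6 {A : Type} [Fintype A] [TopologicalSpace A] [DiscreteTopology A]
    (x : ℤ → A) (hx : IsToeplitz x) (hnp : ¬ IsPeriodicSeq x)
    (p : ℕ → ℕ) (hps : IsPeriodStructure x p)
    (c : ℕ) (hc : 1 ≤ c) :
    IsToeplitzFlow (orbitClosure x) (shiftMap^[c]) ↔ ∀ k, Nat.gcd c (p k) = 1 := by
  constructor
  · intro hflow
    exact backward_core hps (exists_agree hflow)
  · intro hg
    exact forward_dir hx hps hc hg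

end
end

section
/- Let θ be the substitution on {a,b} with θ(a) = ab and θ(b) = aa, and let X_θ be its substitution subshift. Let γ be the substitution on {A,B,C,D,E} with γ(A) = ABAC, γ(B) = ABDE, γ(C) = AEDC, γ(D) = ABDC, γ(E) = AEDE, and let X_γ be its substitution subshift. Then (X_θ, σ³) is topologically conjugate to (X_γ, σ). -/
open Set Topology Classical

noncomputable section

/-- The substitution θ(a) = ab, θ(b) = aa on the alphabet {a, b} = Fin 2 (a = 0, b = 1). -/
def theta : Fin 2 → List (Fin 2) := fun i => if i = 0 then [0, 1] else [0, 0]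

/-- The substitution γ on {A,B,C,D,E} = Fin 5 (A = 0, …, E = 4). -/
def gam : Fin 5 → List (Fin 5) := fun i =>
  if i = 0 then [0, 1, 0, 2]
  else if i = 1 then [0, 1, 3, 4]
  else if i = 2 then [0, 4, 3, 2]
  else if i = 3 then [0, 1, 3, 2]
  else [0, 4, 3, 4]


-- ===================== auxiliary development =====================

/-- decode: A=010, B=001, C=100, D=000, E=101 -/
def decode : Fin 5 → List (Fin 2) := fun c =>
  if c = 0 then [0,1,0] else if c = 1 then [0,0,1] else if c = 2 then [1,0,0]
  else if c = 3 then [0,0,0] else [1,0,1]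

def code3 : Fin 2 → Fin 2 → Fin 2 → Fin 5 := fun a b c =>
  if a = 0 then (if b = 0 then (if c = 0 then 3 else 1) else 0)
  else (if c = 0 then 2 else 4)

def Phi (x : ℤ → Fin 2) : ℤ → Fin 5 := fun n => code3 (x (3*n)) (x (3*n+1)) (x (3*n+2))

def Psi (y : ℤ → Fin 5) : ℤ → Fin 2 := fun m => (decode (y (m / 3))).getD (m % 3).toNat 0

def L3 : List (List (Fin 2)) := [[0,1,0],[0,0,1],[1,0,0],[0,0,0],[1,0,1]]

lemma decode_len : ∀ c, (decode c).length = 3 := by decide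

lemma theta_len1 : ∀ a : Fin 2, (theta a).length = 2 := by decide

lemma code3_decode : ∀ (c : Fin 5) (t0 t1 t2 : Fin 2), decode c = [t0,t1,t2] → code3 t0 t1 t2 = c := by
  decide

lemma code3_decode' : ∀ c : Fin 5,
    code3 ((decode c).getD 0 0) ((decode c).getD 1 0) ((decode c).getD 2 0) = c := by decide

lemma decode_code3 : ∀ t0 t1 t2 : Fin 2, [t0,t1,t2] ∈ L3 → decode (code3 t0 t1 t2) = [t0,t1,t2] := by
  decide

lemma decode_gam : ∀ c : Fin 5, (gam c).flatMap decode = (decode c).flatMap (substPow theta 2) := by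
  decide

-- basic seqWord lemmas
lemma seqWord_length {A : Type} (x : ℤ → A) (i : ℤ) (n : ℕ) : (seqWord x i n).length = n := by
  simp [seqWord]

lemma seqWord_getElem {A : Type} (x : ℤ → A) (i : ℤ) (n u : ℕ) (hu : u < n) :
    (seqWord x i n)[u]'(by simpa [seqWord] using hu) = x (i + u) := by
  simp [seqWord]

-- substPow lemmas
lemma substPow_add {A : Type} (f : A → List A) (j k : ℕ) (a : A) :
    substPow f (j + k) a = (substPow f k a).flatMap (substPow f j) := by
  induction k generalizing a with
  | zero => simp [substPow]
  | succ k ih =>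
    show (f a).flatMap (substPow f (j + k)) = ((f a).flatMap (substPow f k)).flatMap (substPow f j)
    rw [show substPow f (j + k) = fun b => (substPow f k b).flatMap (substPow f j) from funext ih]
    rw [List.flatMap_assoc]

lemma substPow_succ' {A : Type} (f : A → List A) (k : ℕ) :
    ∀ a, substPow f (k+1) a = (substPow f k a).flatMap f := by
  induction k with
  | zero => intro a; simp [substPow]
  | succ k ih =>
    intro a
    show (f a).flatMap (substPow f (k+1)) = ((f a).flatMap (substPow f k)).flatMap f
    rw [show substPow f (k+1) = fun b => (substPow f k b).flatMap f from funext ih]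
    rw [List.flatMap_assoc]

lemma infixFlatMap {A B : Type} {v w : List A} (h : v.IsInfix w) (f : A → List B) :
    (v.flatMap f).IsInfix (w.flatMap f) := by
  obtain ⟨s, t, rfl⟩ := h
  exact ⟨s.flatMap f, t.flatMap f, by simp [List.flatMap_append]⟩

lemma flat_len_const {A B : Type} (f : A → List B) (c : ℕ) (h : ∀ a, (f a).length = c) :
    ∀ l : List A, (l.flatMap f).length = c * l.length := by
  intro l
  induction l with
  | nil => simp
  | cons a l ih => rw [List.flatMap_cons, List.length_append, h, ih, List.length_cons]; ring

lemma substPow_len (k : ℕ) : ∀ a : Fin 2, (substPow theta k a).length = 2^k := by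
  induction k with
  | zero => intro a; rfl
  | succ k ih =>
    intro a
    show ((theta a).flatMap (substPow theta k)).length = _
    rw [flat_len_const (substPow theta k) (2^k) ih, theta_len1]
    ring

lemma drop_take_infix {A : Type} (u : List A) (a b : ℕ) : ((u.drop a).take b).IsInfix u :=
  (List.take_prefix b _).isInfix.trans (List.drop_suffix a u).isInfix

lemma infix_pos {A : Type} {v u : List A} (h : v.IsInfix u) :
    ∃ s, s + v.length ≤ u.length ∧ v = (u.drop s).take v.length := by
  obtain ⟨s0, t0, hst⟩ := h
  refine ⟨s0.length, ?_, ?_⟩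
  · have hc := congrArg List.length hst
    simp only [List.length_append] at hc
    omega
  · rw [← hst, List.append_assoc, List.drop_left]
    exact List.take_left.symm

lemma theta2_flat (q : ℕ) : ∀ w : List (Fin 2), (w.flatMap theta).drop (2*q) = (w.drop q).flatMap theta := by
  induction q with
  | zero => intro w; simp
  | succ q ih =>
    intro w
    cases w with
    | nil => simp
    | cons a w =>
      rw [List.flatMap_cons, show 2*(q+1) = 2 + 2*q by ring, ← List.drop_drop]
      rw [List.drop_left' (theta_len1 a)]
      rw [ih w]
      rfl

lemma sub_flat (w v : List (Fin 2)) (h : v.IsInfix (w.flatMap theta)) (hv : v.length ≤ 3) :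
    v = [] ∨ (∃ c, c ∈ w ∧ v.IsInfix (theta c)) ∨
      (∃ c d, ([c,d] : List (Fin 2)).IsInfix w ∧ v.IsInfix (theta c ++ theta d)) := by
  obtain ⟨s, hs, hveq⟩ := infix_pos h
  have hflen : (w.flatMap theta).length = 2 * w.length := flat_len_const theta 2 theta_len1 w
  rw [hflen] at hs
  have hdropeq : (w.flatMap theta).drop s = ((w.drop (s/2)).flatMap theta).drop (s % 2) := by
    rw [← theta2_flat, List.drop_drop]
    congr 1
    omega
  cases hw2 : w.drop (s/2) with
  | nil =>
    left
    have hwl : w.length ≤ s/2 := List.drop_eq_nil_iff.mp hw2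
    have : v.length = 0 := by omega
    exact List.length_eq_zero_iff.mp this
  | cons c w3 =>
    cases hw3 : w3 with
    | nil =>
      right; left
      refine ⟨c, (List.drop_suffix (s/2) w).subset (by rw [hw2]; exact List.mem_cons_self), ?_⟩
      rw [hveq, hdropeq, hw2, hw3]
      simp only [List.flatMap_cons, List.flatMap_nil, List.append_nil]
      exact drop_take_infix _ _ _
    | cons d w4 =>
      right; right
      have hcd : ([c,d] : List (Fin 2)).IsInfix w := by
        have hpre : ([c,d] : List (Fin 2)).IsPrefix (w.drop (s/2)) := by
          rw [hw2, hw3]; exact ⟨w4, rfl⟩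
        exact hpre.isInfix.trans (List.drop_suffix (s/2) w).isInfix
      refine ⟨c, d, hcd, ?_⟩
      have hlen4 : (theta c ++ theta d).length = 4 := by
        simp [List.length_append, theta_len1]
      have hveq2 : v = ((theta c ++ theta d).drop (s%2)).take v.length := by
        conv_lhs => rw [hveq]
        rw [hdropeq, hw2, hw3]
        simp only [List.flatMap_cons]
        rw [← List.append_assoc]
        rw [List.drop_append]
        rw [show s % 2 - (theta c ++ theta d).length = 0 by omega, List.drop_zero]
        rw [List.take_append]
        have hdl : ((theta c ++ theta d).drop (s%2)).length = 4 - s % 2 := by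
          rw [List.length_drop, hlen4]
        rw [show v.length - ((theta c ++ theta d).drop (s%2)).length = 0 by omega,
          List.take_zero, List.append_nil]
      rw [hveq2]
      exact drop_take_infix _ _ _

lemma legal3 (k : ℕ) (a : Fin 2) (v : List (Fin 2)) (h : v.IsInfix (substPow theta k a))
    (hl : v.length = 3) : v ∈ L3 := by
  cases k with
  | zero =>
    have := h.length_le
    simp [substPow] at this
    omega
  | succ k =>
    rw [substPow_succ'] at h
    rcases sub_flat _ _ h (by omega) with h0 | ⟨c, hc, hvc⟩ | ⟨c, d, hcd, hvcd⟩
    · rw [h0] at hl; simp at hl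
    · have := hvc.length_le
      rw [theta_len1] at this
      omega
    · obtain ⟨p, q, z, rfl⟩ : ∃ p q z, v = [p, q, z] := by
        rcases v with _ | ⟨p, v⟩
        · simp at hl
        rcases v with _ | ⟨q, v⟩
        · simp at hl
        rcases v with _ | ⟨z, v⟩
        · simp at hl
        rcases v with _ | ⟨zz, v⟩
        · exact ⟨p, q, z, rfl⟩
        · simp at hl
      fin_cases p <;> fin_cases q <;> fin_cases z <;> fin_cases c <;> fin_cases d <;>
        revert hvcd <;> decide

lemma list3_eq {A : Type} (L : List A) (d : A) (h : L.length = 3) :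
    L = [L.getD 0 d, L.getD 1 d, L.getD 2 d] := by
  match L, h with
  | [a,b,c], _ => rfl

lemma decodeStar_getD (W : List (Fin 5)) : ∀ (u : ℕ), u < 3 * W.length →
    (W.flatMap decode).getD u 0 = (decode (W.getD (u / 3) 0)).getD (u % 3) 0 := by
  induction W with
  | nil => intro u hu; simp at hu
  | cons c W ih =>
    intro u hu
    rw [List.flatMap_cons]
    by_cases h3 : u < 3
    · rw [List.getD_append _ _ _ _ (by rw [decode_len]; omega)]
      rw [show u / 3 = 0 by omega, show u % 3 = u by omega]
      rfl
    · rw [List.getD_append_right _ _ _ _ (by rw [decode_len]; omega)]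
      rw [decode_len]
      have hu' : u - 3 < 3 * W.length := by
        simp [List.length_cons] at hu
        omega
      rw [ih (u - 3) hu']
      rw [show (u - 3) / 3 = u / 3 - 1 by omega, show (u - 3) % 3 = u % 3 by omega]
      congr 2
      rw [show u / 3 = (u/3 - 1) + 1 by omega]
      rfl

lemma gam_theta (M : ℕ) : ∀ c : Fin 5,
    (substPow gam M c).flatMap decode = (decode c).flatMap (substPow theta (2*M)) := by
  induction M with
  | zero => intro c; simp [substPow]
  | succ M ih =>
    intro c
    show ((gam c).flatMap (substPow gam M)).flatMap decode = _
    rw [List.flatMap_assoc]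
    have h1 := congrArg (gam c).flatMap (funext ih)
    rw [h1, ← List.flatMap_assoc, decode_gam c, List.flatMap_assoc]
    have h2 : (fun a => (substPow theta 2 a).flatMap (substPow theta (2*M)))
        = fun a => substPow theta (2*(M+1)) a := by
      funext a
      rw [show 2*(M+1) = 2*M+2 by ring, ← substPow_add]
    rw [h2]

lemma two_pow_mod3 (K : ℕ) : 2^K % 3 = 1 ∨ 2^K % 3 = 2 := by
  induction K with
  | zero => left; rfl
  | succ K ih => rw [pow_succ]; omega

lemma occ_shift (K : ℕ) (l0 r0 V l t : List (Fin 2))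
    (h0 : substPow theta 3 0 = l0 ++ [0] ++ r0)
    (h : substPow theta K 0 = l ++ V ++ t) :
    ∃ L T : List (Fin 2), substPow theta (K+3) 0 = L ++ V ++ T ∧
      L.length = 2^K * l0.length + l.length := by
  refine ⟨l0.flatMap (substPow theta K) ++ l, t ++ r0.flatMap (substPow theta K), ?_, ?_⟩
  · rw [substPow_add theta K 3 0, h0]
    rw [List.flatMap_append, List.flatMap_append]
    rw [show ([0] : List (Fin 2)).flatMap (substPow theta K) = substPow theta K 0 by simp]
    rw [h]
    simp [List.append_assoc]
  · rw [List.length_append, flat_len_const (substPow theta K) (2^K) (substPow_len K)]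

lemma prefix_step (m : ℕ) (l V t : List (Fin 2)) (h : substPow theta m 0 = l ++ V ++ t) :
    substPow theta (m+1) 0 = l ++ V ++ (t ++ substPow theta m 1) := by
  show (theta 0).flatMap (substPow theta m) = _
  rw [show theta 0 = [0,1] by decide]
  simp only [List.flatMap_cons, List.flatMap_nil, List.append_nil]
  rw [h]
  simp [List.append_assoc]

-- =========== the forward map lands in the gamma shift ===========

lemma phi_mem {x : ℤ → Fin 2} (hx : x ∈ substShift theta) : Phi x ∈ substShift gam := by
  intro i n
  obtain ⟨k, a, hka⟩ := hx (3*i) (3*n)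
  set V := seqWord x (3*i) (3*n) with hV
  have hVlen : V.length = 3*n := seqWord_length _ _ _
  have ha : ([a] : List (Fin 2)).IsInfix (substPow theta 2 0) := by
    fin_cases a <;> decide
  have h1 : V.IsInfix (substPow theta (k+2) 0) := by
    have h2 := infixFlatMap ha (substPow theta k)
    rw [← substPow_add] at h2
    have h3 : V.IsInfix (([a] : List (Fin 2)).flatMap (substPow theta k)) := by
      simpa using hka
    exact h3.trans h2
  obtain ⟨l, t, hlt⟩ := h1
  have hsplit3 : ∃ l0 r0 : List (Fin 2), substPow theta 3 0 = l0 ++ [0] ++ r0 ∧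
      3 ∣ 2^(k+2) * l0.length + l.length := by
    rcases two_pow_mod3 (k+2) with h2 | h2 <;>
      rcases (show l.length % 3 = 0 ∨ l.length % 3 = 1 ∨ l.length % 3 = 2 by omega) with h3|h3|h3
    · exact ⟨[], [1,0,0,0,1,0,1], by decide, by simp; omega⟩
    · exact ⟨[0,1], [0,0,1,0,1], by decide, by simp; omega⟩
    · exact ⟨[0,1,0,0], [1,0,1], by decide, by simp; omega⟩
    · exact ⟨[], [1,0,0,0,1,0,1], by decide, by simp; omega⟩
    · exact ⟨[0,1,0,0], [1,0,1], by decide, by simp; omega⟩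
    · exact ⟨[0,1], [0,0,1,0,1], by decide, by simp; omega⟩
  obtain ⟨l0, r0, h30, hdvd⟩ := hsplit3
  obtain ⟨L1, T1, hLT1, hL1len⟩ := occ_shift (k+2) l0 r0 V l t h30 hlt.symm
  have hdvd1 : 3 ∣ L1.length := by rw [hL1len]; exact hdvd
  have hEven : ∃ M T, substPow theta (2*M) 0 = L1 ++ V ++ T := by
    rcases Nat.even_or_odd (k+2+3) with he | ho
    · obtain ⟨M, hM⟩ := he
      exact ⟨M, T1, by rw [show 2*M = k+2+3 by omega]; exact hLT1⟩
    · have h4 := prefix_step (k+2+3) L1 V T1 hLT1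
      obtain ⟨m0, hm0⟩ := ho
      exact ⟨m0+1, T1 ++ substPow theta (k+2+3) 1, by
        rw [show 2*(m0+1) = k+2+3+1 by omega]; exact h4⟩
  obtain ⟨M, T, hMT⟩ := hEven
  have hdec : (substPow gam M 0).flatMap decode
      = L1 ++ V ++ (T ++ (substPow theta (2*M) 1 ++ substPow theta (2*M) 0)) := by
    rw [gam_theta M 0]
    rw [show decode 0 = [0,1,0] by decide]
    simp only [List.flatMap_cons, List.flatMap_nil, List.append_nil]
    rw [hMT]
    simp [List.append_assoc]
  obtain ⟨j, hjL⟩ : ∃ j, L1.length = 3*j := ⟨L1.length/3, by omega⟩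
  have hXlen : 3 * (substPow gam M 0).length
      = 3*j + 3*n + (T.length
        + ((substPow theta (2*M) 1).length + (substPow theta (2*M) 0).length)) := by
    have hc := congrArg List.length hdec
    rw [flat_len_const decode 3 decode_len] at hc
    simp only [List.length_append, hVlen, hjL] at hc
    omega
  have hjn : j + n ≤ (substPow gam M 0).length := by omega
  have key : ∀ u : ℕ, u < 3*n →
      V.getD u 0 = (decode ((substPow gam M 0).getD (j + u/3) 0)).getD (u % 3) 0 := by
    intro u hu
    have hidx : L1.length + u < 3 * (substPow gam M 0).length := by omega
    have h6 := decodeStar_getD (substPow gam M 0) (L1.length + u) hidx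
    rw [show (L1.length + u)/3 = j + u/3 by omega, show (L1.length+u)%3 = u%3 by omega] at h6
    rw [← h6, hdec, List.append_assoc]
    rw [List.getD_append_right _ _ _ _ (by omega)]
    rw [show L1.length + u - L1.length = u by omega]
    rw [List.getD_append _ _ _ _ (by omega)]
  have hfin : seqWord (Phi x) i n = ((substPow gam M 0).drop j).take n := by
    apply List.ext_getElem
    · rw [seqWord_length, List.length_take, List.length_drop]
      omega
    · intro m h1 h2
      have hm : m < n := by
        rw [seqWord_length] at h1
        exact h1
      rw [List.getElem_take, List.getElem_drop]
      rw [seqWord_getElem (Phi x) i n m hm]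
      have hjm : j + m < (substPow gam M 0).length := by omega
      rw [← List.getD_eq_getElem (substPow gam M 0) 0 hjm]
      have keyS : ∀ s : ℕ, s < 3 →
          (decode ((substPow gam M 0).getD (j+m) 0)).getD s 0 = x (3*(i+(m:ℤ))+(s:ℤ)) := by
        intro s hs
        have h7 := key (3*m+s) (by omega)
        rw [show (3*m+s)/3 = m by omega, show (3*m+s)%3 = s by omega] at h7
        rw [← h7, hV]
        rw [List.getD_eq_getElem _ 0 (by rw [seqWord_length]; omega)]
        rw [seqWord_getElem x (3*i) (3*n) (3*m+s) (by omega)]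
        congr 1
        push_cast
        ring
      have k0 := keyS 0 (by norm_num)
      have k1 := keyS 1 (by norm_num)
      have k2 := keyS 2 (by norm_num)
      simp only [Nat.cast_zero, Nat.cast_one, Nat.cast_ofNat, add_zero] at k0 k1 k2
      have hdec3 : decode ((substPow gam M 0).getD (j+m) 0)
          = [x (3*(i+(m:ℤ))), x (3*(i+(m:ℤ))+1), x (3*(i+(m:ℤ))+2)] := by
        rw [list3_eq (decode ((substPow gam M 0).getD (j+m) 0)) 0 (decode_len _), k0, k1, k2]
      exact code3_decode _ _ _ _ hdec3
  refine ⟨M, 0, ?_⟩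
  rw [hfin]
  exact drop_take_infix _ _ _

-- =========== the backward map lands in the theta shift ===========

lemma psi_mem {y : ℤ → Fin 5} (hy : y ∈ substShift gam) : Psi y ∈ substShift theta := by
  intro i n
  obtain ⟨k, c, hkc⟩ := hy (i/3) (n/3 + 2)
  have hYlen : (seqWord y (i/3) (n/3+2)).length = n/3+2 := seqWord_length _ _ _
  have hflatlen : ((seqWord y (i/3) (n/3+2)).flatMap decode).length = 3 * (n/3+2) := by
    rw [flat_len_const decode 3 decode_len, hYlen]
  have hd3 : (i % 3).toNat < 3 := by omega
  have hid : i = 3 * (i/3) + ((i % 3).toNat : ℤ) := by omega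
  have hfin : seqWord (Psi y) i n
      = (((seqWord y (i/3) (n/3+2)).flatMap decode).drop (i % 3).toNat).take n := by
    apply List.ext_getElem
    · rw [seqWord_length, List.length_take, List.length_drop, hflatlen]
      omega
    · intro m h1 h2
      have hm : m < n := by rw [seqWord_length] at h1; exact h1
      rw [List.getElem_take, List.getElem_drop]
      rw [seqWord_getElem (Psi y) i n m hm]
      have hidx : (i % 3).toNat + m < 3 * (n/3+2) := by omega
      rw [← List.getD_eq_getElem _ 0 (by rw [hflatlen]; omega)]
      rw [decodeStar_getD _ _ (by rw [hYlen]; omega)]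
      have hlt : ((i % 3).toNat + m)/3 < n/3+2 := by omega
      rw [List.getD_eq_getElem (seqWord y (i/3) (n/3+2)) 0 (by rw [hYlen]; omega)]
      rw [seqWord_getElem y (i/3) (n/3+2) (((i % 3).toNat + m)/3) hlt]
      show (decode (y ((i + (m:ℤ)) / 3))).getD ((i + (m:ℤ)) % 3).toNat 0 = _
      rw [show (i + (m:ℤ)) / 3 = i/3 + ((((i % 3).toNat + m)/3 : ℕ) : ℤ) by omega]
      rw [show ((i + (m:ℤ)) % 3).toNat = ((i % 3).toNat + m) % 3 by omega]
  refine ⟨2*k+3, 0, ?_⟩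
  have hinf1 : (seqWord (Psi y) i n).IsInfix ((seqWord y (i/3) (n/3+2)).flatMap decode) := by
    rw [hfin]
    exact drop_take_infix _ _ _
  have hinf2 := infixFlatMap hkc decode
  have hinf3 : ((substPow gam k c).flatMap decode).IsInfix (substPow theta (2*k+3) 0) := by
    rw [gam_theta]
    have hdc : (decode c).IsInfix (substPow theta 3 0) := by fin_cases c <;> decide
    have h8 := infixFlatMap hdc (substPow theta (2*k))
    rw [← substPow_add] at h8
    exact h8
  exact (hinf1.trans hinf2).trans hinf3

-- =========== inverses ===========

lemma psi_phi {x : ℤ → Fin 2} (hx : x ∈ substShift theta) : Psi (Phi x) = x := by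
  funext m
  obtain ⟨k, a, hka⟩ := hx (3*(m/3)) 3
  have hsw : seqWord x (3*(m/3)) 3 = [x (3*(m/3)), x (3*(m/3)+1), x (3*(m/3)+2)] := by
    apply List.ext_getElem (by rw [seqWord_length]; rfl)
    intro u h1 h2
    have hu : u < 3 := by rw [seqWord_length] at h1; exact h1
    rw [seqWord_getElem x (3*(m/3)) 3 u hu]
    interval_cases u <;> norm_num
  rw [hsw] at hka
  have hleg : [x (3*(m/3)), x (3*(m/3)+1), x (3*(m/3)+2)] ∈ L3 := legal3 k a _ hka rfl
  have hdec : decode (code3 (x (3*(m/3))) (x (3*(m/3)+1)) (x (3*(m/3)+2)))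
      = [x (3*(m/3)), x (3*(m/3)+1), x (3*(m/3)+2)] := decode_code3 _ _ _ hleg
  show (decode (Phi x (m/3))).getD (m % 3).toNat 0 = x m
  have hPhi : Phi x (m/3) = code3 (x (3*(m/3))) (x (3*(m/3)+1)) (x (3*(m/3)+2)) := rfl
  rw [hPhi, hdec]
  rcases (show m % 3 = 0 ∨ m % 3 = 1 ∨ m % 3 = 2 by omega) with h|h|h <;>
    rw [h] <;> simp <;> congr 1 <;> omega

lemma phi_psi (y : ℤ → Fin 5) : Phi (Psi y) = y := by
  funext n
  show code3 ((decode (y ((3*n)/3))).getD ((3*n) % 3).toNat 0)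
      ((decode (y ((3*n+1)/3))).getD ((3*n+1) % 3).toNat 0)
      ((decode (y ((3*n+2)/3))).getD ((3*n+2) % 3).toNat 0) = y n
  rw [show (3*n)/3 = n by omega, show (3*n+1)/3 = n by omega, show (3*n+2)/3 = n by omega]
  rw [show ((3*n) % 3).toNat = 0 by omega, show ((3*n+1) % 3).toNat = 1 by omega,
    show ((3*n+2) % 3).toNat = 2 by omega]
  exact code3_decode' (y n)

-- =========== dynamics and topology ===========

lemma shift_mem {A : Type} {f : A → List A} {x : ℤ → A} (h : x ∈ substShift f) :
    shiftMap x ∈ substShift f := by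
  intro i n
  obtain ⟨k, a, hka⟩ := h (i+1) n
  refine ⟨k, a, ?_⟩
  have hsw : seqWord (shiftMap x) i n = seqWord x (i+1) n := by
    unfold seqWord shiftMap
    congr 1
    funext m
    congr 1
    ring
  rw [hsw]
  exact hka

lemma iterate3 (x : ℤ → Fin 2) (m : ℤ) : (shiftMap^[3]) x m = x (m + 3) := by
  show x (m + 1 + 1 + 1) = x (m + 3)
  congr 1
  ring

lemma cont_Phi : Continuous Phi := by
  apply continuous_pi
  intro n
  have h : (fun x : ℤ → Fin 2 => Phi x n) =
      (fun t : Fin 2 × Fin 2 × Fin 2 => code3 t.1 t.2.1 t.2.2) ∘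
      (fun x : ℤ → Fin 2 => (x (3*n), x (3*n+1), x (3*n+2))) := rfl
  rw [h]
  exact continuous_of_discreteTopology.comp
    ((continuous_apply _).prodMk ((continuous_apply _).prodMk (continuous_apply _)))

lemma cont_Psi : Continuous Psi := by
  apply continuous_pi
  intro m
  have h : (fun y : ℤ → Fin 5 => Psi y m) =
      (fun c : Fin 5 => (decode c).getD (m % 3).toNat 0) ∘ (fun y : ℤ → Fin 5 => y (m / 3)) := rfl
  rw [h]
  exact continuous_of_discreteTopology.comp (continuous_apply _)


/-- (X_θ, σ³) is topologically conjugate to (X_γ, σ). -/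
theorem statement9 :
    TopConj (substShift theta) (shiftMap^[3]) (substShift gam) shiftMap := by
  have hS : Set.MapsTo (shiftMap^[3]) (substShift theta) (substShift theta) := by
    intro x hx
    exact shift_mem (shift_mem (shift_mem hx))
  have hR : Set.MapsTo shiftMap (substShift gam) (substShift gam) := fun y hy => shift_mem hy
  refine ⟨hS, hR,
    ⟨⟨fun x => ⟨Phi x.1, phi_mem x.2⟩, fun y => ⟨Psi y.1, psi_mem y.2⟩,
      fun x => Subtype.ext (psi_phi x.2), fun y => Subtype.ext (phi_psi y.1)⟩,
      (cont_Phi.comp continuous_subtype_val).subtype_mk _,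
      (cont_Psi.comp continuous_subtype_val).subtype_mk _⟩, ?_⟩
  intro x
  apply Subtype.ext
  show Phi ((shiftMap^[3]) x.1) = shiftMap (Phi x.1)
  funext n
  show code3 (((shiftMap^[3]) x.1) (3*n)) (((shiftMap^[3]) x.1) (3*n+1)) (((shiftMap^[3]) x.1) (3*n+2))
      = code3 (x.1 (3*(n+1))) (x.1 (3*(n+1)+1)) (x.1 (3*(n+1)+2))
  rw [iterate3, iterate3, iterate3]
  rw [show (3*n+3 : ℤ) = 3*(n+1) by ring, show (3*n+1+3 : ℤ) = 3*(n+1)+1 by ring,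
    show (3*n+2+3 : ℤ) = 3*(n+1)+2 by ring]

end
end

section
/- Let X be a Cantor space (nonempty, compact, metrizable, totally disconnected, with no isolated points), let T be a minimal homeomorphism of X, let p : X → {1,2,3,...} be continuous, suppose S(x) = T^{p(x)}(x) is a homeomorphism of X with every S-orbit dense, and let c be the orbit number of the speedup. For x ∈ X and n ≥ 1 write p(x,n) = Σ_{i=0}^{n-1} p(S^i(x)), so that S^n(x) = T^{p(x,n)}(x). Then the following are equivalent: (1) there exists a finite partition of X into nonempty clopen sets, on each of which p is constant, such that p(x,n) = c·n for every x ∈ X and every n ≥ 1 for which S^n(x) lies in the same part of the partition as x; (2) there exists a continuous function g : X → ℤ such that p(x) = c + g(x) − g(S(x)) for all x ∈ X (i.e., p − c is an S-coboundary). -/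
open Set Topology Classical

noncomputable section

/-- for a minimal bounded speedup of a minimal Cantor system, p(x,n) = c·n
along returns to the parts of some clopen partition on which p is constant, iff p - c
is an S-coboundary. -/
theorem statement10 {X : Type} [TopologicalSpace X] [CompactSpace X] [TopologicalSpace.MetrizableSpace X]
    [TotallyDisconnectedSpace X] [Nonempty X]
    (hni : ∀ x : X, ¬ IsOpen ({x} : Set X))
    (T : X → X) (hT : IsHomeomorph T) (hTmin : MinimalOn T Set.univ)
    (p : X → ℕ) (hpcont : Continuous p) (hppos : ∀ x, 1 ≤ p x)
    (S : X → X) (hSdef : S = fun x => T^[p x] x)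
    (hSh : IsHomeomorph S) (hSmin : MinimalOn S Set.univ)
    (c : ℕ) (hc : OrbitNumberOn T S Set.univ c) :
    ((∃ (ι : Type) (_ : Fintype ι) (Q : ι → Set X),
        (∀ i, IsClopen (Q i) ∧ (Q i).Nonempty) ∧
        Pairwise (Function.onFun Disjoint Q) ∧
        (⋃ i, Q i) = Set.univ ∧
        (∀ i, ∀ x ∈ Q i, ∀ y ∈ Q i, p x = p y) ∧
        (∀ x : X, ∀ n : ℕ, 1 ≤ n → (∃ i, x ∈ Q i ∧ S^[n] x ∈ Q i) →
          psum p S x n = c * n)) ↔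
      (∃ g : X → ℤ, Continuous g ∧ ∀ x, (p x : ℤ) = c + g x - g (S x))) := by
  have hScont : Continuous S := hSh.continuous
  have hSinj : Function.Injective S := hSh.bijective.1
  constructor
  · rintro ⟨ι, hι, Q, hQ, hdisj, hcov, hpc, hps⟩
    obtain ⟨x0⟩ := (inferInstance : Nonempty X)
    obtain ⟨i0, hx0⟩ : ∃ i, x0 ∈ Q i := by
      have : x0 ∈ ⋃ i, Q i := hcov ▸ Set.mem_univ x0
      simpa using this
    set Q0 := Q i0 with hQ0def
    have hQ0 : IsClopen Q0 := (hQ i0).1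
    -- Every forward S-orbit hits Q0
    have hA : ∀ x : X, ∃ n : ℕ, S^[n] x ∈ Q0 := by
      by_contra hcon
      push_neg at hcon
      obtain ⟨z, hz⟩ := hcon
      set K : Set X := {x | ∀ n : ℕ, S^[n] x ∉ Q0} with hKdef
      have hKcl : IsClosed K := by
        have : K = ⋂ n : ℕ, (S^[n]) ⁻¹' Q0ᶜ := by
          ext y; simp [hKdef, Set.mem_iInter]
        rw [this]
        exact isClosed_iInter fun n =>
          (hQ0.isOpen.isClosed_compl).preimage (hScont.iterate n)
      have hKne : K.Nonempty := ⟨z, hz⟩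
      have hSK : S '' K ⊆ K := by
        rintro _ ⟨y, hy, rfl⟩ n
        rw [← Function.iterate_succ_apply]
        exact hy (n + 1)
      set C : ℕ → Set X := fun n => S^[n] '' K with hCdef
      have hCsub : ∀ n, C (n + 1) ⊆ C n := by
        intro n
        have : C (n + 1) = S^[n] '' (S '' K) := by
          simp only [hCdef, ← Set.image_comp, ← Function.iterate_succ_apply]
          rfl
        rw [this]
        exact Set.image_mono hSK
      have hCne : ∀ n, (C n).Nonempty := fun n => hKne.image _
      have hCcomp : ∀ n, IsCompact (C n) :=
        fun n => (hKcl.isCompact).image (hScont.iterate n)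
      have hCcl : ∀ n, IsClosed (C n) := fun n => (hCcomp n).isClosed
      obtain ⟨w, hw⟩ := IsCompact.nonempty_iInter_of_sequence_nonempty_isCompact_isClosed
        C hCsub hCne (hCcomp 0) hCcl
      have hwC : ∀ n, w ∈ C n := by
        intro n; exact Set.mem_iInter.1 hw n
      have hwK : w ∈ K := by
        have := hwC 0
        simpa [hCdef] using this
      -- orbitIn S univ w ⊆ K
      have horb : orbitIn S Set.univ w ⊆ K := by
        rintro y ⟨-, n, hn | hn⟩
        · subst hn
          intro m
          rw [← Function.iterate_add_apply]
          exact hwK (m + n)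
        · obtain ⟨u, hu, huw⟩ := hwC n
          have : u = y := by
            have hinj : Function.Injective (S^[n]) := hSinj.iterate n
            exact hinj (huw.trans hn.symm)
          exact this ▸ hu
      have := hSmin w (Set.mem_univ w)
      obtain ⟨q, hq⟩ := (hQ i0).2
      have hqK : q ∈ K := by
        have : q ∈ closure (orbitIn S Set.univ w) := this (Set.mem_univ q)
        exact hKcl.closure_subset_iff.2 horb this
      exact hqK 0 hq
    -- first return time and the transfer function
    set r : X → ℕ := fun x => Nat.find (hA x) with hrdef
    have hrspec : ∀ x, S^[r x] x ∈ Q0 := fun x => Nat.find_spec (hA x)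
    have hrmin : ∀ x, ∀ m < r x, S^[m] x ∉ Q0 := fun x m hm => Nat.find_min (hA x) hm
    set g : X → ℤ := fun x => ∑ i ∈ Finset.range (r x), ((p (S^[i] x) : ℤ) - c) with hgdef
    refine ⟨g, ?_, ?_⟩
    · -- continuity: g is locally constant-formula
      rw [continuous_iff_continuousAt]
      intro x
      set n := r x with hn
      have hgn : ∀ y, r y = n → g y = ∑ i ∈ Finset.range n, ((p (S^[i] y) : ℤ) - c) := by
        intro y hy; simp [hgdef, hy]
      set V : Set X := (S^[n]) ⁻¹' Q0 ∩ ⋂ m : Fin n, (S^[(m : ℕ)]) ⁻¹' Q0ᶜ with hVdef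
      have hVopen : IsOpen V := by
        refine (hQ0.isOpen.preimage (hScont.iterate n)).inter ?_
        exact isOpen_iInter_of_finite fun m =>
          hQ0.isClosed.isOpen_compl.preimage (hScont.iterate (m : ℕ))
      have hxV : x ∈ V := by
        refine ⟨hrspec x, ?_⟩
        rw [Set.mem_iInter]
        intro m
        exact hrmin x m m.2
      have hVr : ∀ y ∈ V, r y = n := by
        rintro y ⟨h1, h2⟩
        rw [Set.mem_iInter] at h2
        have h3 : r y ≤ n := Nat.find_le h1
        rcases lt_or_eq_of_le h3 with h4 | h4
        · exact absurd (hrspec y) (h2 ⟨r y, h4⟩)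
        · exact h4
      have : ContinuousAt (fun y => ∑ i ∈ Finset.range n, ((p (S^[i] y) : ℤ) - c)) x := by
        apply Continuous.continuousAt
        apply continuous_finset_sum
        intro i _
        exact (continuous_of_discreteTopology.comp (hpcont.comp (hScont.iterate i))).sub continuous_const
      apply this.congr
      filter_upwards [hVopen.mem_nhds hxV] with y hy
      exact (hgn y (hVr y hy)).symm
    · -- cocycle identity
      intro x
      by_cases hx : x ∈ Q0
      · have hr0 : r x = 0 := by
          rw [hrdef]
          simp only [Nat.find_eq_zero]
          simpa using hx
        have hg0 : g x = 0 := by simp [hgdef, hr0]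
        set m := r (S x) with hm
        have hret : S^[m + 1] x ∈ Q0 := by
          rw [Function.iterate_succ_apply]
          exact hrspec (S x)
        have hsum : psum p S x (m + 1) = c * (m + 1) :=
          hps x (m + 1) (Nat.succ_le_succ (Nat.zero_le m)) ⟨i0, hx, hret⟩
        have hsum' : (∑ i ∈ Finset.range (m + 1), (p (S^[i] x) : ℤ)) = (c : ℤ) * (m + 1) := by
          have := congrArg (fun k : ℕ => (k : ℤ)) hsum
          simpa [psum, Nat.cast_sum] using this
        have hgx : g (S x) = ∑ i ∈ Finset.range m, ((p (S^[i + 1] x) : ℤ) - c) := by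
          simp [hgdef, ← hm, Function.iterate_succ_apply]
        have hexp : g (S x) = (∑ i ∈ Finset.range (m + 1), (p (S^[i] x) : ℤ)) - (p x : ℤ)
            - (c : ℤ) * m := by
          rw [hgx, Finset.sum_sub_distrib]
          rw [show (∑ i ∈ Finset.range (m + 1), (p (S^[i] x) : ℤ))
              = (∑ i ∈ Finset.range m, (p (S^[i + 1] x) : ℤ)) + (p (S^[0] x) : ℤ)
            from Finset.sum_range_succ' _ m]
          simp
          ring
        rw [hg0, hexp, hsum']
        push_cast
        ring
      · have hr1 : 1 ≤ r x := by
          rcases Nat.eq_zero_or_pos (r x) with h | h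
          · exact absurd (h ▸ hrspec x) (by simpa using hx)
          · exact h
        have hstep : r x = r (S x) + 1 := by
          have h1 : r (S x) + 1 ≤ r x := by
            by_contra hcon
            push_neg at hcon
            have h2 : r x - 1 < r (S x) := by omega
            have h3 : S^[r x - 1] (S x) ∈ Q0 := by
              have he : S^[r x - 1] (S x) = S^[r x] x := by
                rw [← Function.iterate_succ_apply]
                congr 1
                omega
              rw [he]
              exact hrspec x
            exact hrmin (S x) _ h2 h3
          have h2 : r x ≤ r (S x) + 1 := by
            apply Nat.find_le
            rw [Function.iterate_succ_apply]
            exact hrspec (S x)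
          omega
        have hgx : g x = ((p x : ℤ) - c) + g (S x) := by
          simp only [hgdef, hstep]
          rw [Finset.sum_range_succ' (fun i => ((p (S^[i] x) : ℤ) - c)) (r (S x))]
          simp [Function.iterate_succ_apply, add_comm]
        rw [hgx]; ring
  · rintro ⟨g, hgcont, hg⟩
    -- partition by fibers of (p, g)
    set F : X → ℕ × ℤ := fun x => (p x, g x) with hFdef
    have hFcont : Continuous F := hpcont.prodMk hgcont
    have hfin : (Set.range F).Finite := by
      have : IsCompact (Set.range F) := isCompact_range hFcont
      exact this.finite_of_discrete
    refine ⟨Set.range F, hfin.fintype, fun i => F ⁻¹' {(i : ℕ × ℤ)}, ?_, ?_, ?_, ?_, ?_⟩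
    · rintro ⟨v, x, hx⟩
      constructor
      · exact (isClopen_discrete {v}).preimage hFcont
      · exact ⟨x, by simp [hx]⟩
    · rintro ⟨v, hv⟩ ⟨w, hw⟩ hne
      simp only [Function.onFun, Set.disjoint_left]
      rintro x hx hx'
      apply hne
      have : v = w := by
        simp only [Set.mem_preimage, Set.mem_singleton_iff] at hx hx'
        rw [← hx, ← hx']
      exact Subtype.ext this
    · ext x
      simp only [Set.mem_iUnion, Set.mem_univ, iff_true]
      exact ⟨⟨F x, x, rfl⟩, rfl⟩
    · rintro ⟨v, hv⟩ x hx y hy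
      simp only [Set.mem_preimage, Set.mem_singleton_iff] at hx hy
      have : p x = v.1 := by rw [← hx]
      rw [this, ← hy]
    · rintro x n hn ⟨⟨v, hv⟩, hx, hxn⟩
      simp only [Set.mem_preimage, Set.mem_singleton_iff] at hx hxn
      have hgeq : g x = g (S^[n] x) := by
        have h1 : g x = v.2 := by rw [← hx]
        have h2 : g (S^[n] x) = v.2 := by rw [← hxn]
        rw [h1, h2]
      have key : (psum p S x n : ℤ) = c * n := by
        have htel : (∑ i ∈ Finset.range n, ((g (S^[i] x)) - g (S^[i + 1] x)))
            = g (S^[0] x) - g (S^[n] x) := Finset.sum_range_sub' (fun i => g (S^[i] x)) n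
        have hterm : ∀ i, (p (S^[i] x) : ℤ) = c + (g (S^[i] x) - g (S^[i + 1] x)) := by
          intro i
          have := hg (S^[i] x)
          rw [← Function.iterate_succ_apply' S i x] at this
          linarith
        calc (psum p S x n : ℤ) = ∑ i ∈ Finset.range n, (p (S^[i] x) : ℤ) := by
              simp [psum, Nat.cast_sum]
          _ = ∑ i ∈ Finset.range n, ((c : ℤ) + (g (S^[i] x) - g (S^[i + 1] x))) := by
              exact Finset.sum_congr rfl fun i _ => hterm i
          _ = c * n + (g (S^[0] x) - g (S^[n] x)) := by
              rw [Finset.sum_add_distrib, htel]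
              simp [mul_comm]
          _ = c * n := by
              simp only [Function.iterate_zero_apply] at *
              rw [← hgeq]
              ring
      exact_mod_cast key

end
end
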